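/- Let R be an associative unital ring (not necessarily commutative), α : ℤ → R a family of elements, and S_s^k(n) the associated non-commutative Svinin polynomials. Let m ≥ 1 be an integer and let d_{2k} (0 ≤ k ≤ m) and c_{2k+1} (0 ≤ k ≤ m) be central elements of R. Define, for 0 ≤ k ≤ m and n ∈ ℤ, B_{2k+1,n} := c_{2k+1} − Σ_{r=1}^{m−k} d_{2(k+r)} · S_r^r(n+r−1), P_{2k,n} := Σ_{r=0}^{m−k} d_{2(k+r)} · S_{r+1}^r(n+r−1), and D_{k,n} := −(d_{2k} + 2·c_{2k+1}) + P_{2k,n} + B_{2k+1,n} + B_{2k+1,n−1}. Then for every 0 ≤ k ≤ m and every n ∈ ℤ, α_n · B_{2k+1,n} − B_{2k+1,n} · α_n = α_n · D_{k,n+1} − D_{k,n} · α_n; moreover, if R is commutative then D_{k,n} = 0 for all 0 ≤ k ≤ m and all n ∈ ℤ. -/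

import Mathlib

/-- Non-commutative Svinin polynomials: `svinin α s k n` is `S_s^k(n)`, defined by
`S_s^0(n) = 1` and `S_s^k(n) = Σ_{j=0}^{s−1} α_{n−k−j+1} · S_{s−j}^{k−1}(n−j)` for `k ≥ 1`. -/
def svinin {R : Type*} [Ring R] (α : ℤ → R) : ℕ → ℕ → ℤ → R
  | _, 0, _ => 1
  | s, k + 1, n =>
      ∑ j ∈ Finset.range s,
        α (n - ((k : ℤ) + 1) - (j : ℤ) + 1) * svinin α (s - j) k (n - (j : ℤ))

/-- `Bcoef α m d c k n` is `B_{2k+1,n} = c_{2k+1} − Σ_{r=1}^{m−k} d_{2(k+r)} · S_r^r(n+r−1)`,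
where `d j` stands for `d_{2j}` and `c j` stands for `c_{2j+1}`. -/
def Bcoef {R : Type*} [Ring R] (α : ℤ → R) (m : ℕ) (d c : ℕ → R) (k : ℕ) (n : ℤ) : R :=
  c k - ∑ r ∈ Finset.Icc 1 (m - k), d (k + r) * svinin α r r (n + (r : ℤ) - 1)

/-- `Pcoef α m d k n` is `P_{2k,n} = Σ_{r=0}^{m−k} d_{2(k+r)} · S_{r+1}^r(n+r−1)`,
where `d j` stands for `d_{2j}`. -/
def Pcoef {R : Type*} [Ring R] (α : ℤ → R) (m : ℕ) (d : ℕ → R) (k : ℕ) (n : ℤ) : R :=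
  ∑ r ∈ Finset.range (m - k + 1), d (k + r) * svinin α (r + 1) r (n + (r : ℤ) - 1)

/-- `Dcoef α m d c k n` is `D_{k,n} = −(d_{2k} + 2c_{2k+1}) + P_{2k,n} + B_{2k+1,n} + B_{2k+1,n−1}`. -/
def Dcoef {R : Type*} [Ring R] (α : ℤ → R) (m : ℕ) (d c : ℕ → R) (k : ℕ) (n : ℤ) : R :=
  -(d k + 2 * c k) + Pcoef α m d k n + Bcoef α m d c k n + Bcoef α m d c k (n - 1)

section Aux

def aseg {R : Type*} [Ring R] (α : ℤ → R) : ℕ → ℤ → R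
  | 0, _ => 1
  | t+1, a => α a * aseg α t (a+1)

variable {R : Type*} [Ring R] (α : ℤ → R)

lemma svinin_zero' (k : ℕ) (n : ℤ) : svinin α 0 (k+1) n = 0 := by
  simp [svinin]

lemma svinin_succ (s k : ℕ) (n : ℤ) : svinin α s (k+1) n =
    ∑ j ∈ Finset.range s, α (n - ((k : ℤ) + 1) - (j : ℤ) + 1) * svinin α (s - j) k (n - (j : ℤ)) := by
  rw [svinin]

lemma svinin_k_zero (s : ℕ) (N : ℤ) : svinin α s 0 N = 1 := by
  rw [svinin]

lemma svinin_front (s k : ℕ) (N : ℤ) :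
    svinin α (s+1) (k+1) N = svinin α s (k+1) (N-1) + α (N - k) * svinin α (s+1) k N := by
  rw [svinin_succ α (s+1) k N, Finset.sum_range_succ', svinin_succ α s k (N-1)]
  simp only [Nat.succ_sub_succ, Nat.sub_zero, Nat.cast_zero]
  congr 1
  · apply Finset.sum_congr rfl
    intro i _
    congr 1
    · congr 1; push_cast; ring
    · congr 1; push_cast; ring
  · congr 2 <;> (push_cast; ring)

lemma svinin_back (k : ℕ) : ∀ (s : ℕ) (N : ℤ),
    svinin α (s+1) (k+1) N = svinin α s (k+1) N + svinin α (s+1) k (N-1) * α (N - s) := by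
  induction k with
  | zero =>
    intro s N
    rw [svinin_succ α (s+1) 0 N, svinin_succ α s 0 N, Finset.sum_range_succ]
    simp only [svinin, mul_one, one_mul]
    congr 1
    congr 1
    push_cast; ring
  | succ k ih =>
    intro s N
    rw [svinin_succ α (s+1) (k+1) N, svinin_succ α s (k+1) N, Finset.sum_range_succ]
    rw [svinin_succ α (s+1) k (N-1), Finset.sum_mul, Finset.sum_range_succ]
    rw [← add_assoc]
    congr 1
    · rw [← Finset.sum_add_distrib]
      apply Finset.sum_congr rfl
      intro j hj
      simp only [Finset.mem_range] at hj
      have h1 : s + 1 - j = (s - j) + 1 := by omega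
      rw [h1, ih (s - j) (N - j), mul_add]
      have hc : ((s - j : ℕ) : ℤ) = s - j := by push_cast [Nat.cast_sub (by omega : j ≤ s)]; ring
      rw [hc, mul_assoc]
      congr 3
      · push_cast; ring
      · push_cast; ring
      · congr 1; push_cast; ring
    · have h0 := ih 0 (N - (s : ℤ))
      rw [svinin_zero'] at h0
      simp only [zero_add, Nat.cast_zero, sub_zero] at h0
      have h2 : s + 1 - s = 1 := by omega
      rw [h2, h0, ← mul_assoc]
      congr 2
      · congr 1; push_cast; ring
      · congr 1; push_cast; ring

lemma svinin_one (q : ℕ) (N : ℤ) : svinin α 1 q N = aseg α q (N - q + 1) := by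
  induction q generalizing N with
  | zero => simp [svinin, aseg]
  | succ q ih =>
    rw [svinin]
    simp only [Finset.sum_range_one, Nat.cast_zero, sub_zero, Nat.sub_zero]
    rw [ih]
    rw [show (aseg α (q+1) (N - ((q+1:ℕ):ℤ) + 1) : R) = α (N - ((q+1:ℕ):ℤ) + 1) * aseg α q (N - ((q+1:ℕ):ℤ) + 1 + 1) from rfl]
    have e1 : N - ((q:ℤ)+1) + 1 = N - ((q+1:ℕ):ℤ) + 1 := by push_cast; ring
    have e2 : N - (q:ℤ) + 1 = N - ((q+1:ℕ):ℤ) + 1 + 1 := by push_cast; ring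
    rw [e1, e2]

lemma svinin_swap {S : Type*} [CommRing S] (β : ℤ → S) :
    ∀ a t (M : ℤ), svinin β (a+1) (a+t) M = svinin β (a+t+1) a M * aseg β t (M - (a+t : ℕ) + 1) := by
  intro a
  induction a with
  | zero =>
    intro t M
    simp only [Nat.zero_add, zero_add]
    rw [svinin_k_zero, svinin_one, one_mul]
  | succ a iha =>
    intro t
    induction t with
    | zero =>
      intro M
      simp [aseg]
    | succ t iht =>
      intro M
      rw [show a+1+(t+1) = (a+t+1)+1 from by omega, show a+2 = (a+1)+1 from by omega]
      rw [svinin_front β (a+1) (a+t+1) M]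
      have hA := iha (t+2) (M-1)
      rw [show a+(t+2) = (a+t+1)+1 from by omega] at hA
      rw [hA]
      have hT := iht M
      rw [show a+1+t = a+t+1 from by omega] at hT
      rw [hT]
      have hB := svinin_back β a (a+t+2) M
      rw [show (a+t+2)+1 = (a+t+1)+1+1 from by omega, show a+t+2 = (a+t+1)+1 from by omega] at hB
      rw [hB]
      rw [show (aseg β (t+1) (M - ((a+t+1)+1 : ℕ) + 1) : S) = β (M - ((a+t+1)+1:ℕ) + 1) * aseg β t (M - ((a+t+1)+1:ℕ) + 1 + 1) from rfl]
      rw [show (aseg β (t+2) (M - 1 - ((a+t+1)+1 : ℕ) + 1) : S) = β (M-1 - ((a+t+1)+1:ℕ) + 1) * (β (M-1 - ((a+t+1)+1:ℕ) + 1 + 1) * aseg β t (M-1 - ((a+t+1)+1:ℕ) + 1 + 1 + 1)) from rfl]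
      push_cast
      ring_nf

lemma sum_combineL (x u v : R) (M : ℕ) (A B : ℕ → R) :
    x * ((∑ i ∈ Finset.range M, A i + u) + (v - ∑ i ∈ Finset.range M, B i))
      = (∑ i ∈ Finset.range M, (x * A i - x * B i)) + (x * u + x * v) := by
  rw [Finset.sum_sub_distrib, ← Finset.mul_sum, ← Finset.mul_sum]
  noncomm_ring

lemma sum_combineR (x u v : R) (M : ℕ) (A B : ℕ → R) :
    ((∑ i ∈ Finset.range M, A i + u) + (v - ∑ i ∈ Finset.range M, B i)) * x
      = (∑ i ∈ Finset.range M, (A i * x - B i * x)) + (u * x + v * x) := by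
  rw [Finset.sum_sub_distrib, ← Finset.sum_mul, ← Finset.sum_mul]
  noncomm_ring

lemma cen_step (x D X W Z : R) (h : x * D = D * x) :
    x * (D * (X + W * x)) - x * (D * X) = (D * (Z + x * W)) * x - (D * Z) * x := by
  have h1 : x * (D * (X + W * x)) - x * (D * X) = x * D * (W * x) := by noncomm_ring
  have h2 : (D * (Z + x * W)) * x - (D * Z) * x = D * x * (W * x) := by noncomm_ring
  rw [h1, h2, h]

lemma keyE (m : ℕ) (d c : ℕ → R)
    (hd : ∀ k ≤ m, d k ∈ Set.center R) (k : ℕ) (hk : k ≤ m) (n : ℤ)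
    (hd0 : d k * α n = α n * d k) (hc0 : c k * α n = α n * c k) :
    α n * (Pcoef α m d k (n+1) + Bcoef α m d c k (n+1)) =
    (Pcoef α m d k n + Bcoef α m d c k (n-1)) * α n := by
  simp only [Pcoef, Bcoef]
  rw [← Finset.Ico_add_one_right_eq_Icc, Finset.sum_Ico_eq_sum_range, Finset.sum_Ico_eq_sum_range]
  simp only [Nat.succ_sub_one, Nat.add_sub_cancel]
  rw [Finset.sum_range_succ' _ (m-k), Finset.sum_range_succ' _ (m-k)]
  rw [sum_combineL, sum_combineR]
  congr 1
  · apply Finset.sum_congr rfl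
    intro i hi
    simp only [Finset.mem_range] at hi
    rw [show 1+i = i+1 from by omega]
    rw [show (n+1+((i+1:ℕ):ℤ)-1 : ℤ) = n+i+1 from by push_cast; ring]
    rw [show (n+((i+1:ℕ):ℤ)-1 : ℤ) = n+i from by push_cast; ring]
    rw [show (n-1+((i+1:ℕ):ℤ)-1 : ℤ) = n+i-1 from by push_cast; ring]
    have hback := svinin_back α i (i+1) (n+(i:ℤ)+1)
    rw [show (n+(i:ℤ)+1-1 : ℤ) = n+i from by ring,
        show (n+(i:ℤ)+1-((i+1:ℕ):ℤ) : ℤ) = n from by push_cast; ring] at hback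
    have hfront := svinin_front α (i+1) i (n+(i:ℤ))
    rw [show (n+(i:ℤ)-(i:ℤ) : ℤ) = n from by ring] at hfront
    rw [hback, hfront]
    have hdc : α n * d (k+(i+1)) = d (k+(i+1)) * α n :=
      ((Set.mem_center_iff.mp (hd (k+(i+1)) (by omega))).comm (α n)).symm
    exact cen_step (α n) (d (k+(i+1))) _ _ _ hdc
  · rw [svinin_k_zero, svinin_k_zero]
    simp only [mul_one, Nat.add_zero]
    rw [hd0, hc0]

end Aux


lemma Dcoef_eq_zero {S : Type*} [CommRing S] (β : ℤ → S) (m : ℕ) (d c : ℕ → S) (k : ℕ) (n : ℤ) :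
    Dcoef β m d c k n = 0 := by
  simp only [Dcoef, Pcoef, Bcoef]
  rw [← Finset.Ico_add_one_right_eq_Icc, Finset.sum_Ico_eq_sum_range, Finset.sum_Ico_eq_sum_range]
  simp only [Nat.succ_sub_one, Nat.add_sub_cancel]
  rw [Finset.sum_range_succ' _ (m-k)]
  rw [svinin_k_zero]
  have hsum : (∑ i ∈ Finset.range (m-k), d (k+(1+i)) * svinin β (1+i) (1+i) (n + ((1+i:ℕ):ℤ) - 1))
      + (∑ i ∈ Finset.range (m-k), d (k+(1+i)) * svinin β (1+i) (1+i) (n - 1 + ((1+i:ℕ):ℤ) - 1))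
      = ∑ i ∈ Finset.range (m-k), d (k+(i+1)) * svinin β ((i+1)+1) (i+1) (n + ((i+1:ℕ):ℤ) - 1) := by
    rw [← Finset.sum_add_distrib]
    apply Finset.sum_congr rfl
    intro i hi
    rw [show 1+i = i+1 from by omega]
    rw [show (n + ((i+1:ℕ):ℤ) - 1 : ℤ) = n + (i:ℤ) from by push_cast; ring]
    rw [show (n - 1 + ((i+1:ℕ):ℤ) - 1 : ℤ) = n + (i:ℤ) - 1 from by push_cast; ring]
    have hback := svinin_back β i (i+1) (n+(i:ℤ))
    rw [show (n+(i:ℤ) - ((i+1:ℕ):ℤ) : ℤ) = n - 1 from by push_cast; ring] at hback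
    have hswap := svinin_swap β i 1 (n+(i:ℤ)-1)
    rw [show (n+(i:ℤ)-1 - ((i+1:ℕ):ℤ) + 1 : ℤ) = n - 1 from by push_cast; ring] at hswap
    rw [show (aseg β 1 (n-1 : ℤ) : S) = β (n-1) * 1 from rfl] at hswap
    rw [hback, hswap]
    ring
  simp only [Nat.add_zero, mul_one]
  linear_combination -hsum

/-- For `0 ≤ k ≤ m` and all `n`:
`α_n · B_{2k+1,n} − B_{2k+1,n} · α_n = α_n · D_{k,n+1} − D_{k,n} · α_n`; moreover, if `R` is
commutative then `D_{k,n} = 0` for all `0 ≤ k ≤ m` and all `n`. -/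
theorem dPI_Dterm_identity {R : Type*} [Ring R] (α : ℤ → R)
    (m : ℕ) (hm : 1 ≤ m) (d c : ℕ → R)
    (hd : ∀ k ≤ m, d k ∈ Set.center R) (hc : ∀ k ≤ m, c k ∈ Set.center R) :
    (∀ k ≤ m, ∀ n : ℤ,
        α n * Bcoef α m d c k n - Bcoef α m d c k n * α n
          = α n * Dcoef α m d c k (n + 1) - Dcoef α m d c k n * α n) ∧
    ((∀ x y : R, x * y = y * x) → ∀ k ≤ m, ∀ n : ℤ, Dcoef α m d c k n = 0) := by
  constructor
  · intro k hk n
    have hd0 : d k * α n = α n * d k := (Set.mem_center_iff.mp (hd k hk)).comm (α n)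
    have hc0 : c k * α n = α n * c k := (Set.mem_center_iff.mp (hc k hk)).comm (α n)
    have key := keyE α m d c hd k hk n hd0 hc0
    have key' : α n * Pcoef α m d k (n+1) + α n * Bcoef α m d c k (n+1)
        = Pcoef α m d k n * α n + Bcoef α m d c k (n-1) * α n := by
      rw [← mul_add, ← add_mul]; exact key
    simp only [Dcoef]
    rw [show (n+1-1 : ℤ) = n from by ring]
    have expand : α n * (-(d k + 2*c k) + Pcoef α m d k (n+1) + Bcoef α m d c k (n+1) + Bcoef α m d c k n)
          - (-(d k + 2*c k) + Pcoef α m d k n + Bcoef α m d c k n + Bcoef α m d c k (n-1)) * α n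
        = ((α n * Pcoef α m d k (n+1) + α n * Bcoef α m d c k (n+1))
            - (Pcoef α m d k n * α n + Bcoef α m d c k (n-1) * α n))
          + (α n * Bcoef α m d c k n - Bcoef α m d c k n * α n)
          + ((d k * α n - α n * d k) + 2 * (c k * α n - α n * c k)) := by
      noncomm_ring
    rw [expand, key', hd0, hc0]
    noncomm_ring
  · intro hcomm k hk n
    letI : CommRing R := { (inferInstance : Ring R) with mul_comm := hcomm }
    exact Dcoef_eq_zero α m d c k n
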